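/- Let H be a complex Hilbert space, P a bounded idempotent operator on H with range 𝒱, and S a bounded operator on H with S ∘ P = S, range of S contained in 𝒱, and ‖P − S‖ ≤ ε for some 0 ≤ ε < 1. Let A = (id_H − (P − S))⁻¹. If A ∘ S ∘ A = P, then A = id_H and S = P. -/

import Mathlib

set_option maxHeartbeats 1000000
noncomputable section

/-- If `P` is a bounded idempotent with range `𝒱`, `S ∘ P = S`, `range S ⊆ 𝒱`,
`‖P − S‖ ≤ ε < 1`, and `A = (id − (P − S))⁻¹` satisfies `A S A = P`, then `A = id` and
`S = P`. -/
theorem exact_dual_of_modified_pair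
    {H : Type*} [NormedAddCommGroup H] [InnerProductSpace ℂ H] [CompleteSpace H]
    (𝒱 : Submodule ℂ H) [CompleteSpace 𝒱]
    (P S : H →L[ℂ] H) (hPidem : P * P = P) (hPran : LinearMap.range (P : H →ₗ[ℂ] H) = 𝒱)
    (hSP : S * P = S) (hSran : LinearMap.range (S : H →ₗ[ℂ] H) ≤ 𝒱)
    (ε : ℝ) (hε0 : 0 ≤ ε) (hε1 : ε < 1) (hPS : ‖P - S‖ ≤ ε)
    (A : H →L[ℂ] H) (hA₁ : A * (1 - (P - S)) = 1) (hA₂ : (1 - (P - S)) * A = 1)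
    (hASA : A * S * A = P) :
    A = 1 ∧ S = P := by
  -- P acts as identity on range of S
  have hPS' : P * S = S := by
    ext x
    have hx : S x ∈ LinearMap.range (P : H →ₗ[ℂ] H) := by
      rw [hPran]; exact hSran (LinearMap.mem_range_self (S : H →ₗ[ℂ] H) x)
    obtain ⟨y, hy⟩ := hx
    have h1 : (P * P) y = P y := by rw [hPidem]
    simp only [ContinuousLinearMap.mul_apply, ContinuousLinearMap.coe_coe] at h1 hy ⊢
    rw [← hy, h1]
  -- rearranged inverse identities
  have h₁ : A - A * (P - S) = 1 := by rw [← hA₁]; noncomm_ring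
  have h₂ : A - (P - S) * A = 1 := by rw [← hA₂]; noncomm_ring
  have hAD : A * (P - S) = A - 1 := by rw [← h₁]; abel
  have hDA : (P - S) * A = A - 1 := by rw [← h₂]; abel
  -- (P - S) * P = P - S  and  P * (P - S) = P - S
  have hDP : (P - S) * P = P - S := by rw [sub_mul, hPidem, hSP]
  have hPD : P * (P - S) = P - S := by rw [mul_sub, hPidem, hPS']
  -- A * P = P + A - 1
  have hAP : A * P = P + A - 1 := by
    have : (A - 1) * P = A - 1 := by
      rw [← hAD, mul_assoc, hDP, hAD]
    rw [sub_mul, one_mul, sub_eq_iff_eq_add] at this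
    rw [this]; abel
  -- P * A = P + A - 1
  have hPA : P * A = P + A - 1 := by
    have : P * (A - 1) = A - 1 := by
      rw [← hDA, ← mul_assoc, hPD, hDA]
    rw [mul_sub, mul_one, sub_eq_iff_eq_add] at this
    rw [this]; abel
  -- A * S * A = P * A = P + A - 1
  have key : A * S * A = P + A - 1 := by
    have hS : S = P - (P - S) := by abel
    calc A * S * A = A * (P - (P - S)) * A := by rw [← hS]
      _ = (A * P) * A - (A * (P - S)) * A := by rw [mul_sub, sub_mul]
      _ = (P + A - 1) * A - (A - 1) * A := by rw [hAP, hAD]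
      _ = P * A := by noncomm_ring
      _ = P + A - 1 := hPA
  have hA1 : A = 1 := by
    have h := key.symm.trans hASA
    rw [sub_eq_iff_eq_add] at h
    exact add_left_cancel h
  refine ⟨hA1, ?_⟩
  have := hA₁
  rw [hA1, one_mul] at this
  have hD0 : P - S = 0 := sub_eq_self.mp this
  exact (sub_eq_zero.mp hD0).symm
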